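/- Let Z be a positive definite n×n complex matrix with largest eigenvalue a and smallest eigenvalue b. Then for every unit vector h, ‖Zh‖ ≤ ((a+b)/(2√(ab))) · ⟨h, Zh⟩. -/

import Mathlib

open scoped ComplexOrder

lemma aux_kant (m : ℕ) (p lam : Fin m → ℝ) (hp : ∀ i, 0 ≤ p i) (hsum : ∑ i, p i = 1)
    (a b : ℝ) (hb0 : 0 < b) (hba : b ≤ a)
    (hla : ∀ i, lam i ≤ a) (hlb : ∀ i, b ≤ lam i) :
    Real.sqrt (∑ i, p i * (lam i)^2) ≤
      (a + b) / (2 * Real.sqrt (a * b)) * ∑ i, p i * lam i := by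
  have ha0 : 0 < a := lt_of_lt_of_le hb0 hba
  have hab : 0 < a * b := mul_pos ha0 hb0
  set S := ∑ i, p i * lam i with hS
  set Q := ∑ i, p i * (lam i)^2 with hQ
  have hSb : b ≤ S := by
    calc b = ∑ i, p i * b := by rw [← Finset.sum_mul, hsum, one_mul]
    _ ≤ S := Finset.sum_le_sum fun i _ => mul_le_mul_of_nonneg_left (hlb i) (hp i)
  have hkey : Q + a * b ≤ (a + b) * S := by
    calc Q + a * b = ∑ i, p i * ((lam i)^2 + a * b) := by
          simp [hQ, mul_add, Finset.sum_add_distrib, ← Finset.sum_mul, hsum]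
    _ ≤ ∑ i, p i * ((a + b) * lam i) :=
        Finset.sum_le_sum fun i _ => mul_le_mul_of_nonneg_left
          (by nlinarith [hla i, hlb i]) (hp i)
    _ = (a + b) * S := by rw [hS, Finset.mul_sum]; exact Finset.sum_congr rfl fun i _ => by ring
  have hsq : Real.sqrt (a * b) ^ 2 = a * b := Real.sq_sqrt hab.le
  have hsqpos : 0 < Real.sqrt (a * b) := Real.sqrt_pos.mpr hab
  have hS0 : 0 ≤ S := le_trans hb0.le hSb
  rw [show (a + b) / (2 * Real.sqrt (a * b)) * S
      = Real.sqrt (((a + b) * S / (2 * Real.sqrt (a * b)))^2) by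
    rw [Real.sqrt_sq (div_nonneg (mul_nonneg (by linarith) hS0) (by positivity))]; ring]
  apply Real.sqrt_le_sqrt
  rw [div_pow, le_div_iff₀ (by positivity), mul_pow, hsq]
  nlinarith [mul_le_mul_of_nonneg_left hkey hab.le, sq_nonneg ((a + b) * S - 2 * (a * b))]

theorem stmt_0 (n : ℕ) (Z : Matrix (Fin n) (Fin n) ℂ) (hZ : Z.PosDef)
    (a b : ℝ)
    (ha : ∀ i, hZ.1.eigenvalues i ≤ a) (ha' : ∃ i, hZ.1.eigenvalues i = a)
    (hb : ∀ i, b ≤ hZ.1.eigenvalues i) (hb' : ∃ i, hZ.1.eigenvalues i = b)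
    (h : EuclideanSpace ℂ (Fin n)) (hh : ‖h‖ = 1) :
    ‖Matrix.toEuclideanCLM (𝕜 := ℂ) Z h‖ ≤
      (a + b) / (2 * Real.sqrt (a * b)) *
        (inner ℂ h (Matrix.toEuclideanCLM (𝕜 := ℂ) Z h) : ℂ).re := by
  obtain ⟨i₀, hi₀⟩ := hb'
  have hb0 : 0 < b := hi₀ ▸ hZ.eigenvalues_pos i₀
  have hba : b ≤ a := le_trans (hb i₀) (ha i₀)
  set e := hZ.1.eigenvectorBasis with he
  set lam := hZ.1.eigenvalues with hlam
  set T := Matrix.toEuclideanCLM (𝕜 := ℂ) Z with hT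
  set c : Fin n → ℂ := fun j => e.repr h j with hc
  have hTe : ∀ j, T (e j) = (lam j : ℂ) • e j := by
    intro j
    apply (WithLp.equiv 2 _).injective
    rw [WithLp.equiv_apply, Matrix.ofLp_toEuclideanCLM]
    have := hZ.1.mulVec_eigenvectorBasis j
    simpa [WithLp.equiv] using this
  have hTh : T h = ∑ j, ((lam j : ℂ) * c j) • e j := by
    conv_lhs => rw [← e.sum_repr h]
    rw [map_sum]
    exact Finset.sum_congr rfl fun j _ => by rw [map_smul, hTe j, smul_smul, mul_comm]
  have hrepr : ∀ j, e.repr (T h) j = (lam j : ℂ) * c j := by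
    intro j
    rw [e.repr_apply_apply, hTh, inner_sum]
    simp only [inner_smul_right]
    rw [Finset.sum_eq_single j (fun i _ hij => by
      rw [orthonormal_iff_ite.mp e.orthonormal j i, if_neg (Ne.symm hij)]; ring) (by simp)]
    rw [orthonormal_iff_ite.mp e.orthonormal j j, if_pos rfl, mul_one]
  have hnormTh : ‖T h‖ = Real.sqrt (∑ j, ‖c j‖^2 * (lam j)^2) := by
    rw [← e.repr.norm_map (T h), EuclideanSpace.norm_eq]
    congr 1
    refine Finset.sum_congr rfl fun j _ => ?_
    rw [hrepr j, norm_mul, mul_pow]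
    simp [Complex.norm_real, Real.norm_eq_abs, sq_abs, mul_comm]
  have hinner : (inner ℂ h (T h) : ℂ).re = ∑ j, ‖c j‖^2 * lam j := by
    rw [← e.repr.inner_map_map h (T h), PiLp.inner_apply]
    simp only [RCLike.inner_apply, hrepr]
    rw [Complex.re_sum]
    refine Finset.sum_congr rfl fun j _ => ?_
    have h1 : (starRingEnd ℂ) (c j) * ((lam j : ℂ) * c j) = ((‖c j‖^2 * lam j : ℝ) : ℂ) := by
      rw [show (starRingEnd ℂ) (c j) * ((lam j : ℂ) * c j)
          = ((starRingEnd ℂ) (c j) * c j) * (lam j : ℂ) by ring,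
        ← Complex.normSq_eq_conj_mul_self]
      push_cast
      rw [Complex.normSq_eq_norm_sq]
      norm_cast
    rw [mul_comm, show (starRingEnd ℂ) ((e.repr h).ofLp j) = (starRingEnd ℂ) (c j) from rfl,
      h1, Complex.ofReal_re]
  have hsum1 : ∑ j, ‖c j‖^2 = 1 := by
    have : ‖h‖ = Real.sqrt (∑ j, ‖c j‖^2) := by
      rw [← e.repr.norm_map h, EuclideanSpace.norm_eq]
    rw [this] at hh
    nlinarith [Real.sq_sqrt (Finset.sum_nonneg fun j (_ : j ∈ Finset.univ) => sq_nonneg ‖c j‖),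
      Real.sqrt_nonneg (∑ j, ‖c j‖^2)]
  rw [hnormTh, hinner]
  exact aux_kant n (fun j => ‖c j‖^2) lam (fun j => sq_nonneg _) hsum1 a b hb0 hba ha hb
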